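/- arXiv:2309.10762 — 2 statements merged into one kernel-verified Lean document; each statement's English description precedes it below -/
import Mathlib

section
/- The contraction of a conditional oriented matroid is a conditional oriented matroid: if (E, L) is a conditional oriented matroid and A ⊆ E, then (E ∖ A, L/A), where L/A = {X restricted to E ∖ A : X ∈ L, X_e = 0 for all e ∈ A}, is a conditional oriented matroid. -/
variable {E : Type*}

/-- Composition of sign vectors: (X ∘ Y)_e = X_e if X_e ≠ 0, else Y_e. -/
def comp (X Y : E → SignType) : E → SignType := fun e => if X e = 0 then Y e else X e

/-- Sign-vector partial order: X ⪯ Y iff X_e ∈ {0, Y_e} for all e. -/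
def sle (X Y : E → SignType) : Prop := ∀ e, X e = 0 ∨ X e = Y e

/-- Face symmetry condition (FS). -/
def FS (L : Set (E → SignType)) : Prop := ∀ X ∈ L, ∀ Y ∈ L, comp X (-Y) ∈ L

/-- Composition condition (C). -/
def Comp (L : Set (E → SignType)) : Prop := ∀ X ∈ L, ∀ Y ∈ L, comp X Y ∈ L

/-- Symmetry condition (SymCond). -/
def SymCond (L : Set (E → SignType)) : Prop := ∀ X ∈ L, -X ∈ L

/-- Strong elimination condition (SE). -/
def SE (L : Set (E → SignType)) : Prop :=
  ∀ X ∈ L, ∀ Y ∈ L, ∀ e, X e = -Y e → X e ≠ 0 →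
    ∃ Z ∈ L, Z e = 0 ∧ ∀ f, ¬(X f = -Y f ∧ X f ≠ 0) → Z f = comp X Y f

/-- A tope: a maximal element of L with respect to `sle`. -/
def IsTope (L : Set (E → SignType)) (T : E → SignType) : Prop :=
  T ∈ L ∧ ∀ Z ∈ L, sle T Z → Z = T


/-- Restriction of a sign vector to the complement of A. -/
def restrict {A : Set E} (X : E → SignType) : ↥Aᶜ → SignType := fun e => X e

theorem contraction_isCOM [Fintype E] (L : Set (E → SignType)) (hFS : FS L) (hSE : SE L)
    (A : Set E) :
    FS {Y : ↥Aᶜ → SignType | ∃ X ∈ L, (∀ a ∈ A, X a = 0) ∧ Y = restrict X} ∧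
    SE {Y : ↥Aᶜ → SignType | ∃ X ∈ L, (∀ a ∈ A, X a = 0) ∧ Y = restrict X} := by
  constructor
  · rintro Y₁ ⟨X₁, hX₁, hA₁, rfl⟩ Y₂ ⟨X₂, hX₂, hA₂, rfl⟩
    refine ⟨comp X₁ (-X₂), hFS X₁ hX₁ X₂ hX₂, ?_, ?_⟩
    · intro a ha; simp [comp, hA₁ a ha, hA₂ a ha]
    · funext e; simp [comp, restrict]; rfl
  · rintro Y₁ ⟨X₁, hX₁, hA₁, rfl⟩ Y₂ ⟨X₂, hX₂, hA₂, rfl⟩ e he hne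
    obtain ⟨Z, hZ, hZe, hZf⟩ := hSE X₁ hX₁ X₂ hX₂ e he hne
    refine ⟨restrict Z, ⟨Z, hZ, ?_, rfl⟩, hZe, ?_⟩
    · intro a ha
      have := hZf a (by simp [hA₁ a ha])
      simpa [comp, hA₁ a ha, hA₂ a ha] using this
    · intro f hf
      have := hZf f hf
      exact this
end

section
/- Generalization of Mandel's theorem: for a conditional oriented matroid (E, L) with tope set T, one has L = {X ∈ {-1,0,1}^E : ∀ T ∈ T, X ∘ (−T) ∈ T}. In particular, a conditional oriented matroid is completely determined by its set of topes. -/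
variable {E : Type*}

lemma sign_neg_eq_zero {x : SignType} : -x = 0 ↔ x = 0 := by
  cases x <;> decide

lemma sign_neg_self {x : SignType} (h : x = -x) : x = 0 := by
  cases x <;> simp_all

lemma comp_mem {L : Set (E → SignType)} (hFS : FS L) {X Y : E → SignType}
    (hX : X ∈ L) (hY : Y ∈ L) : comp X Y ∈ L := by
  have h2 := hFS X hX _ (hFS X hX Y hY)
  have heq : comp X (-(comp X (-Y))) = comp X Y := by
    funext e; by_cases h : X e = 0 <;> simp [comp, h]
  rwa [heq] at h2

lemma sle_comp_left (X Y : E → SignType) : sle X (comp X Y) := by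
  intro e; by_cases h : X e = 0
  · exact Or.inl h
  · exact Or.inr (by simp [comp, h])

section fin
variable [Fintype E] [DecidableEq E]

def suppF (V : E → SignType) : Finset E := Finset.univ.filter (fun e => V e ≠ 0)

lemma mem_suppF {V : E → SignType} {e : E} : e ∈ suppF V ↔ V e ≠ 0 := by simp [suppF]

lemma exists_tope {L : Set (E → SignType)} (hne : L.Nonempty) : ∃ T, IsTope L T := by
  obtain ⟨V, hV, hmax⟩ := Set.exists_max_image L (fun V => (suppF V).card) (Set.toFinite L) hne
  refine ⟨V, hV, fun Z hZ hle => ?_⟩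
  have hsub : suppF V ⊆ suppF Z := by
    intro e he; rw [mem_suppF] at he ⊢
    rcases hle e with h | h
    · exact absurd h he
    · rw [← h]; exact he
  have heq : suppF V = suppF Z := Finset.eq_of_subset_of_card_le hsub (hmax Z hZ)
  funext e
  by_cases h : V e = 0
  · have : e ∉ suppF Z := by rw [← heq, mem_suppF]; simp [h]
    rw [mem_suppF, not_not] at this; rw [this, h]
  · rcases hle e with h' | h'
    · exact absurd h' h
    · exact h'.symm

lemma tope_supp_max {L : Set (E → SignType)} (hFS : FS L) {T Z : E → SignType}
    (hT : IsTope L T) (hZ : Z ∈ L) : suppF Z ⊆ suppF T := by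
  have h1 : comp T Z ∈ L := comp_mem hFS hT.1 hZ
  have h2 : comp T Z = T := hT.2 _ h1 (sle_comp_left T Z)
  intro e he; rw [mem_suppF] at he ⊢
  intro h0
  have h3 : comp T Z e = Z e := by simp [comp, h0]
  rw [h2, h0] at h3; exact he h3.symm

lemma full_supp_tope {L : Set (E → SignType)} (hFS : FS L) {T Z : E → SignType}
    (hT : IsTope L T) (hZ : Z ∈ L) (hsub : suppF T ⊆ suppF Z) : IsTope L Z := by
  refine ⟨hZ, fun W hW hle => ?_⟩
  funext e
  rcases hle e with h | h
  · have : e ∉ suppF W := fun hc => by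
      have := hsub (tope_supp_max hFS hT hW hc)
      rw [mem_suppF] at this; exact this h
    rw [mem_suppF, not_not] at this; rw [this, h]
  · exact h.symm

-- tope of a sub-family closed under composition with a tope is a tope of L
lemma subtope {L N : Set (E → SignType)} (hFS : FS L) (hNL : N ⊆ L) {T₀ : E → SignType}
    (hT₀ : IsTope L T₀) (hclosed : ∀ R ∈ N, comp R T₀ ∈ N) {R : E → SignType}
    (hR : IsTope N R) : IsTope L R := by
  have h1 : comp R T₀ ∈ N := hclosed R hR.1
  have h2 : comp R T₀ = R := hR.2 _ h1 (sle_comp_left _ _)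
  apply full_supp_tope hFS hT₀ (hNL hR.1)
  intro e he; rw [mem_suppF] at he ⊢
  intro h0
  have h3 : comp R T₀ e = T₀ e := by simp [comp, h0]
  rw [h2, h0] at h3; exact he h3.symm

def flp (B : Finset E) (T : E → SignType) : E → SignType := fun f => if f ∈ B then T f else -T f

lemma lemA : ∀ (n : ℕ) (L : Set (E → SignType)) (B : Finset E),
    Bᶜ.card ≤ n → L.Nonempty → FS L → SE L →
    (∀ Z ∈ L, ∀ W ∈ L, ∀ f ∈ B, Z f = W f) →
    (∀ T, IsTope L T → flp B T ∈ L) →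
    ∃ V ∈ L, ∀ f ∉ B, V f = 0 := by
  intro n
  induction n with
  | zero =>
    intro L B hcard hne _ _ _ _
    obtain ⟨V, hV⟩ := hne
    refine ⟨V, hV, fun f hf => ?_⟩
    exact absurd (Finset.card_eq_zero.mp (Nat.le_zero.mp hcard) ▸ Finset.mem_compl.mpr hf)
      (Finset.notMem_empty f)
  | succ n IH =>
    intro L B hcard hne hFS hSE hagree hsym
    obtain ⟨V, hV, hmin⟩ := Set.exists_min_image L (fun V => (suppF V \ B).card)
      (Set.toFinite L) hne
    by_cases hempty : suppF V \ B = ∅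
    · refine ⟨V, hV, fun f hf => ?_⟩
      by_contra h0
      exact Finset.notMem_empty f (hempty ▸ Finset.mem_sdiff.mpr ⟨mem_suppF.mpr h0, hf⟩)
    · exfalso
      obtain ⟨e, he⟩ := Finset.nonempty_iff_ne_empty.mpr hempty
      rw [Finset.mem_sdiff, mem_suppF] at he
      obtain ⟨heV, heB⟩ := he
      obtain ⟨T₀, hT₀⟩ := exists_tope hne
      set B' : Finset E := B ∪ suppF V with hB'
      set N : Set (E → SignType) := {W | W ∈ L ∧ ∀ f, f ∉ B → V f ≠ 0 → W f = -V f} with hN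
      have hNL : N ⊆ L := fun W hW => hW.1
      have hmemN : ∀ W ∈ L, (∀ f, f ∉ B → V f ≠ 0 → W f = -V f) → W ∈ N :=
        fun W h1 h2 => ⟨h1, h2⟩
      -- N is closed under composition with anything in L
      have hcompN : ∀ R ∈ N, ∀ Y ∈ L, comp R Y ∈ N := by
        intro R hR Y hY
        refine ⟨comp_mem hFS hR.1 hY, fun f hf hVf => ?_⟩
        have h1 := hR.2 f hf hVf
        have hne0 : ¬ R f = 0 := by
          rw [h1]; simp only [sign_neg_eq_zero]; exact hVf
        simp only [comp, if_neg hne0]; exact h1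
      -- comp V T₀ is a tope of L
      have hT₁ : IsTope L (comp V T₀) := by
        apply full_supp_tope hFS hT₀ (comp_mem hFS hV hT₀.1)
        intro f hf; rw [mem_suppF] at hf ⊢
        by_cases h : V f = 0 <;> simp [comp, h, hf]
      have hNne : N.Nonempty := by
        refine ⟨flp B (comp V T₀), hmemN _ (hsym _ hT₁) ?_⟩
        intro f hf hVf
        simp [flp, hf, comp, hVf]
      -- FS for N
      have hFSN : FS N := by
        intro X hX Y hY
        refine ⟨hFS X hX.1 Y hY.1, fun f hf hVf => ?_⟩
        have h1 := hX.2 f hf hVf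
        have hne0 : ¬ X f = 0 := by rw [h1]; simp only [sign_neg_eq_zero]; exact hVf
        simp only [comp, if_neg hne0]; exact h1
      -- SE for N
      have hSEN : SE N := by
        intro X hX Y hY f hf hf0
        obtain ⟨Z, hZ, hZf, hZrest⟩ := hSE X hX.1 Y hY.1 f hf hf0
        have hZN : Z ∈ N := by
          refine ⟨hZ, fun g hg hVg => ?_⟩
          have h1 := hX.2 g hg hVg
          have h2 := hY.2 g hg hVg
          have hnotsep : ¬(X g = -Y g ∧ X g ≠ 0) := by
            rintro ⟨hXY, -⟩
            rw [h1, h2, neg_neg] at hXY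
            exact hVg (sign_neg_self hXY.symm)
          have h3 := hZrest g hnotsep
          have hne0 : ¬ X g = 0 := by rw [h1]; simp only [sign_neg_eq_zero]; exact hVg
          rw [h3]; simp only [comp, if_neg hne0]; exact h1
        exact ⟨Z, hZN, hZf, hZrest⟩
      -- agreement on B'
      have hagreeN : ∀ Z ∈ N, ∀ W ∈ N, ∀ f ∈ B', Z f = W f := by
        intro Z hZ W hW f hf
        rcases Finset.mem_union.mp hf with h | h
        · exact hagree Z hZ.1 W hW.1 f h
        · rw [mem_suppF] at h
          by_cases hB : f ∈ B
          · exact hagree Z hZ.1 W hW.1 f hB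
          · rw [hZ.2 f hB h, hW.2 f hB h]
      -- flip symmetry for (N, B')
      have hsymN : ∀ T, IsTope N T → flp B' T ∈ N := by
        intro R hR
        have hRL : IsTope L R := by
          apply full_supp_tope hFS hT₀ (hNL hR.1)
          have h1 : comp R T₀ ∈ N := hcompN R hR.1 T₀ hT₀.1
          have h2 : comp R T₀ = R := hR.2 _ h1 (sle_comp_left _ _)
          intro g hg; rw [mem_suppF] at hg ⊢
          intro h0
          have h3 : comp R T₀ g = T₀ g := by simp [comp, h0]
          rw [h2, h0] at h3; exact hg h3.symm
        -- R₂ := comp V R is a tope of L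
        have hR₂ : IsTope L (comp V R) := by
          apply full_supp_tope hFS hT₀ (comp_mem hFS hV hRL.1)
          intro g hg
          have hgR := tope_supp_max hFS hRL hT₀.1 hg
          rw [mem_suppF] at hgR ⊢
          by_cases h : V g = 0 <;> simp [comp, h, hgR]
        have hflip := hsym _ hR₂
        have heq : flp B (comp V R) = flp B' R := by
          funext g
          by_cases hgB : g ∈ B
          · have hgB' : g ∈ B' := Finset.mem_union_left _ hgB
            simp only [flp, if_pos hgB, if_pos hgB']
            by_cases h : V g = 0
            · simp only [comp, if_pos h]
            · simp only [comp, if_neg h]; exact hagree V hV R (hNL hR.1) g hgB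
          · by_cases hVg : V g = 0
            · have hgB' : g ∉ B' := by
                simp [hB', Finset.mem_union, hgB, mem_suppF, hVg]
              simp only [flp, if_neg hgB, if_neg hgB', comp, if_pos hVg]
            · have hgB' : g ∈ B' := Finset.mem_union_right _ (mem_suppF.mpr hVg)
              simp only [flp, if_neg hgB, if_pos hgB', comp, if_neg hVg]
              rw [hR.1.2 g hgB hVg]
        have : flp B' R ∈ L := heq ▸ hflip
        refine ⟨this, fun g hg hVg => ?_⟩
        have hgB' : g ∈ B' := Finset.mem_union_right _ (mem_suppF.mpr hVg)
        simp only [flp, hgB', if_true]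
        exact hR.1.2 g hg hVg
      -- cardinality decrease
      have hcard' : B'ᶜ.card ≤ n := by
        have hsub : B'ᶜ ⊆ Bᶜ := Finset.compl_subset_compl.mpr Finset.subset_union_left
        have hesub : e ∈ Bᶜ := Finset.mem_compl.mpr heB
        have hens : e ∉ B'ᶜ := by
          simp [Finset.mem_compl, hB', Finset.mem_union, mem_suppF, heV]
        have : B'ᶜ ⊂ Bᶜ := Finset.ssubset_iff_of_subset hsub |>.mpr ⟨e, hesub, hens⟩
        have := Finset.card_lt_card this
        omega
      obtain ⟨V', hV'N, hV'0⟩ := IH N B' hcard' hNne hFSN hSEN hagreeN hsymN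
      -- eliminate e between V and V'
      have hV'e : V' e = -V e := hV'N.2 e heB heV
      have hVe : V e = -V' e := by rw [hV'e, neg_neg]
      obtain ⟨Z, hZ, hZe, hZrest⟩ := hSE V hV V' (hNL hV'N) e hVe heV
      -- support of Z \ B strictly smaller
      have hsub : suppF Z \ B ⊆ (suppF V \ B).erase e := by
        intro f hf
        rw [Finset.mem_sdiff, mem_suppF] at hf
        obtain ⟨hZf, hfB⟩ := hf
        rw [Finset.mem_erase, Finset.mem_sdiff, mem_suppF]
        have hfe : f ≠ e := fun h => hZf (h ▸ hZe)
        refine ⟨hfe, ?_, hfB⟩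
        intro hVf0
        have hnotsep : ¬(V f = -V' f ∧ V f ≠ 0) := fun hc => hc.2 hVf0
        have h1 := hZrest f hnotsep
        have hfB' : f ∉ B' := by
          simp [hB', Finset.mem_union, hfB, mem_suppF, hVf0]
        have : Z f = V' f := by rw [h1]; simp [comp, hVf0]
        rw [this, hV'0 f hfB'] at hZf
        exact hZf rfl
      have hlt : (suppF Z \ B).card < (suppF V \ B).card := by
        have h1 : (suppF Z \ B).card ≤ ((suppF V \ B).erase e).card := Finset.card_le_card hsub
        have h2 : e ∈ suppF V \ B := Finset.mem_sdiff.mpr ⟨mem_suppF.mpr heV, heB⟩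
        have := Finset.card_erase_of_mem h2
        have hpos : 0 < (suppF V \ B).card := Finset.card_pos.mpr ⟨e, h2⟩
        omega
      exact absurd (hmin Z hZ) (Nat.not_le.mpr hlt)


end fin

theorem mandel_generalization [Fintype E] (L : Set (E → SignType))
    (hne : L.Nonempty) (hFS : FS L) (hSE : SE L) :
    L = {X : E → SignType | ∀ T, IsTope L T → IsTope L (comp X (-T))} := by
  classical
  ext X
  simp only [Set.mem_setOf_eq]
  constructor
  · -- easy direction: covectors satisfy the tope condition
    intro hX T hT
    apply full_supp_tope hFS hT (hFS X hX T hT.1)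
    intro f hf; rw [mem_suppF] at hf ⊢
    by_cases h : X f = 0
    · simp only [comp, if_pos h, Pi.neg_apply, ne_eq, sign_neg_eq_zero]; exact hf
    · simpa [comp, if_neg h] using h
  · -- hard direction
    intro hX
    obtain ⟨T₀, hT₀⟩ := exists_tope hne
    set B : Finset E := suppF X with hB
    set F : Set (E → SignType) := {Z | Z ∈ L ∧ ∀ f, X f ≠ 0 → Z f = X f} with hF
    have hFL : F ⊆ L := fun Z hZ => hZ.1
    have hFne : F.Nonempty := by
      refine ⟨comp X (-T₀), (hX T₀ hT₀).1, fun f hf => ?_⟩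
      simp only [comp, if_neg hf]
    have hFSF : FS F := by
      intro Z hZ W hW
      refine ⟨hFS Z hZ.1 W hW.1, fun f hf => ?_⟩
      have h1 := hZ.2 f hf
      have hne0 : ¬ Z f = 0 := by rw [h1]; exact hf
      simp only [comp, if_neg hne0]; exact h1
    have hSEF : SE F := by
      intro Z hZ W hW e he he0
      obtain ⟨Z', hZ', hZ'e, hZ'rest⟩ := hSE Z hZ.1 W hW.1 e he he0
      refine ⟨Z', ⟨hZ', fun f hf => ?_⟩, hZ'e, hZ'rest⟩
      have h1 := hZ.2 f hf
      have h2 := hW.2 f hf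
      have hnotsep : ¬(Z f = -W f ∧ Z f ≠ 0) := by
        rintro ⟨hZW, -⟩
        rw [h1, h2] at hZW
        exact hf (sign_neg_self hZW)
      have hne0 : ¬ Z f = 0 := by rw [h1]; exact hf
      rw [hZ'rest f hnotsep]
      simp only [comp, if_neg hne0]; exact h1
    have hagreeF : ∀ Z ∈ F, ∀ W ∈ F, ∀ f ∈ B, Z f = W f := by
      intro Z hZ W hW f hf
      rw [hB, mem_suppF] at hf
      rw [hZ.2 f hf, hW.2 f hf]
    have hsymF : ∀ T, IsTope F T → flp B T ∈ F := by
      intro T hT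
      have hTF : T ∈ F := hT.1
      have hTL : IsTope L T := by
        apply full_supp_tope hFS hT₀ (hFL hTF)
        have h1 : comp T T₀ ∈ F := by
          refine ⟨comp_mem hFS (hFL hTF) hT₀.1, fun f hf => ?_⟩
          have h2 := hTF.2 f hf
          have hne0 : ¬ T f = 0 := by rw [h2]; exact hf
          simp only [comp, if_neg hne0]; exact h2
        have h2 : comp T T₀ = T := hT.2 _ h1 (sle_comp_left _ _)
        intro g hg; rw [mem_suppF] at hg ⊢
        intro h0
        have h3 : comp T T₀ g = T₀ g := by simp [comp, h0]
        rw [h2, h0] at h3; exact hg h3.symm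
      have htope := hX T hTL
      have heq : flp B T = comp X (-T) := by
        funext f
        by_cases hf : X f = 0
        · have hfB : f ∉ B := by rw [hB, mem_suppF]; simp [hf]
          simp only [flp, if_neg hfB, comp, if_pos hf, Pi.neg_apply]
        · have hfB : f ∈ B := by rw [hB, mem_suppF]; exact hf
          simp only [flp, if_pos hfB, comp, if_neg hf]
          exact (hTF.2 f hf).symm ▸ (hTF.2 f hf)
      refine ⟨heq ▸ htope.1, fun f hf => ?_⟩
      have hfB : f ∈ B := by rw [hB, mem_suppF]; exact hf
      simp only [flp, if_pos hfB]
      exact hTF.2 f hf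
    obtain ⟨V, hVF, hV0⟩ := lemA Bᶜ.card F B le_rfl hFne hFSF hSEF hagreeF hsymF
    have hVX : V = X := by
      funext f
      by_cases hf : X f = 0
      · have hfB : f ∉ B := by rw [hB, mem_suppF]; simp [hf]
        rw [hV0 f hfB, hf]
      · exact hVF.2 f hf
    exact hVX ▸ hFL hVF
end
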